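/- A G-graded commutative ring R is a Gelfand graded ring if and only if for any two distinct graded maximal ideals M ≠ M', there exist homogeneous elements x, y ∈ h(R) with xy = 0, x ∉ M' and y ∉ M. -/

import Mathlib

section GradedGelfand

variable {G : Type*} [AddGroup G] [DecidableEq G] {R : Type*} [CommRing R]
variable (𝒜 : G → AddSubgroup R) [GradedRing 𝒜]

/-- A homogeneous (graded) prime ideal: a proper graded ideal that is prime
with respect to homogeneous elements. -/
def IsGradedPrime (P : Ideal R) : Prop :=
  P.IsHomogeneous 𝒜 ∧ P ≠ ⊤ ∧
    ∀ a b : R, SetLike.IsHomogeneousElem 𝒜 a → SetLike.IsHomogeneousElem 𝒜 b →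
      a * b ∈ P → a ∈ P ∨ b ∈ P

/-- A graded maximal ideal: a proper graded ideal maximal among proper graded ideals. -/
def IsGradedMaximal (M : Ideal R) : Prop :=
  M.IsHomogeneous 𝒜 ∧ M ≠ ⊤ ∧
    ∀ J : Ideal R, J.IsHomogeneous 𝒜 → M ≤ J → J ≠ ⊤ → J = M

/-- The homogeneous prime spectrum of a graded ring. -/
def GSpec := { P : Ideal R // IsGradedPrime 𝒜 P }

/-- The Zariski topology on the homogeneous prime spectrum, generated by the basic
open sets `D_G(r)` for homogeneous `r`; the closed sets are exactly the `V_G(I)`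
for graded ideals `I`. -/
instance : TopologicalSpace (GSpec 𝒜) :=
  TopologicalSpace.generateFrom
    { U | ∃ r : R, SetLike.IsHomogeneousElem 𝒜 r ∧ U = { P : GSpec 𝒜 | r ∉ P.1 } }

/-- The set of graded maximal ideals inside the homogeneous prime spectrum. -/
def GMax : Set (GSpec 𝒜) := { P | IsGradedMaximal 𝒜 P.1 }

/-- A Gelfand graded ring: every homogeneous prime ideal is contained in a unique
graded maximal ideal. -/
def IsGelfandGraded : Prop :=
  ∀ P : Ideal R, IsGradedPrime 𝒜 P →
    ∃! M : Ideal R, IsGradedMaximal 𝒜 M ∧ P ≤ M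

/-- A pm⁺ graded ring: for every homogeneous prime `P`, the homogeneous primes
containing `P` form a chain. -/
def IsPMPlusGraded : Prop :=
  ∀ P Q Q' : Ideal R, IsGradedPrime 𝒜 P → IsGradedPrime 𝒜 Q → IsGradedPrime 𝒜 Q' →
    P ≤ Q → P ≤ Q' → Q ≤ Q' ∨ Q' ≤ Q

end GradedGelfand

section Statements

variable {G : Type*} [AddGroup G] [DecidableEq G] {R : Type*} [CommRing R]
variable (𝒜 : G → AddSubgroup R) [GradedRing 𝒜]

/-- If every homogeneous element of a graded ideal `P` lies in `M`, then `P ≤ M`. -/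
lemma graded_le_of_homog {P M : Ideal R} (hP : P.IsHomogeneous 𝒜)
    (h : ∀ r : R, SetLike.IsHomogeneousElem 𝒜 r → r ∈ P → r ∈ M) : P ≤ M := by
  classical
  intro p hp
  rw [← DirectSum.sum_support_decompose 𝒜 p]
  refine Ideal.sum_mem _ fun i _ => ?_
  exact h _ (SetLike.isHomogeneousElem_coe _) (hP i hp)

/-- Every proper graded ideal is contained in a graded maximal ideal. -/
lemma exists_gradedMaximal {I : Ideal R} (hI : I.IsHomogeneous 𝒜) (hne : I ≠ ⊤) :
    ∃ M : Ideal R, IsGradedMaximal 𝒜 M ∧ I ≤ M := by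
  obtain ⟨m, hIm, hm⟩ := zorn_le_nonempty₀
      {J : Ideal R | J.IsHomogeneous 𝒜 ∧ J ≠ ⊤}
      (fun c hcs hchain y hy => by
        refine ⟨sSup c, ⟨Ideal.IsHomogeneous.sSup fun J hJ => (hcs hJ).1, ?_⟩,
          fun z hz => le_sSup hz⟩
        intro htop
        have h1 : (1 : R) ∈ sSup c := htop ▸ Submodule.mem_top
        obtain ⟨J, hJc, hJ1⟩ :=
          (Submodule.mem_sSup_of_directed ⟨y, hy⟩ hchain.directedOn).1 h1
        exact (hcs hJc).2 (Ideal.eq_top_of_isUnit_mem _ hJ1 isUnit_one))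
      I ⟨hI, hne⟩
  refine ⟨m, ⟨hm.prop.1, hm.prop.2, fun J hJ hmJ hJne => ?_⟩, hIm⟩
  exact le_antisymm (hm.le_of_ge ⟨hJ, hJne⟩ hmJ) hmJ

/-- A graded maximal ideal is a graded prime ideal. -/
lemma gradedMaximal_isGradedPrime {M : Ideal R} (hM : IsGradedMaximal 𝒜 M) :
    IsGradedPrime 𝒜 M := by
  obtain ⟨hMh, hMne, hMmax⟩ := hM
  refine ⟨hMh, hMne, fun a b ha hb hab => ?_⟩
  by_contra h
  push_neg at h
  obtain ⟨haM, hbM⟩ := h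
  have hJ : (M ⊔ Ideal.span {a}).IsHomogeneous 𝒜 :=
    hMh.sup (Ideal.homogeneous_span 𝒜 {a} (by rintro x rfl; exact ha))
  have hJne : M ⊔ Ideal.span {a} ≠ M := fun h => haM <|
    h ▸ le_sup_right (α := Ideal R) (Ideal.subset_span rfl)
  have hJtop : M ⊔ Ideal.span {a} = ⊤ := by
    by_contra h
    exact hJne (hMmax _ hJ le_sup_left h)
  have h1 : (1 : R) ∈ M ⊔ Ideal.span {a} := hJtop ▸ Submodule.mem_top
  obtain ⟨p, hp, q, hq, hpq⟩ := Submodule.mem_sup.1 h1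
  obtain ⟨r, hr⟩ := Ideal.mem_span_singleton'.1 hq
  have hb2 : (1 : R) = p + r * a := by rw [← hpq, hr]
  have : b = p * b + r * (a * b) := by
    calc b = (p + r * a) * b := by rw [← hb2, one_mul]
    _ = p * b + r * (a * b) := by ring
  exact hbM (this ▸ Ideal.add_mem _ (Ideal.mul_mem_right _ _ hp)
    (Ideal.mul_mem_left _ _ hab))

/-- Given a multiplicatively closed set of homogeneous elements not containing `0`
but containing `1`, there is a graded prime ideal disjoint from it. -/
lemma exists_gradedPrime_disjoint (S : Set R) (hhom : ∀ s ∈ S, SetLike.IsHomogeneousElem 𝒜 s)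
    (hmul : ∀ s ∈ S, ∀ t ∈ S, s * t ∈ S) (h1 : (1 : R) ∈ S) (h0 : (0 : R) ∉ S) :
    ∃ P : Ideal R, IsGradedPrime 𝒜 P ∧ ∀ s ∈ S, s ∉ P := by
  obtain ⟨m, -, hm⟩ := zorn_le_nonempty₀
      {J : Ideal R | J.IsHomogeneous 𝒜 ∧ ∀ s ∈ S, s ∉ J}
      (fun c hcs hchain y hy => by
        refine ⟨sSup c, ⟨Ideal.IsHomogeneous.sSup fun J hJ => (hcs hJ).1,
          fun s hs hmem => ?_⟩, fun z hz => le_sSup hz⟩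
        obtain ⟨J, hJc, hJs⟩ :=
          (Submodule.mem_sSup_of_directed ⟨y, hy⟩ hchain.directedOn).1 hmem
        exact (hcs hJc).2 s hs hJs)
      ⊥ ⟨Ideal.IsHomogeneous.bot 𝒜, fun s hs hmem => h0 ((Ideal.mem_bot.1 hmem) ▸ hs)⟩
  obtain ⟨hmh, hmS⟩ := hm.prop
  have key : ∀ a : R, SetLike.IsHomogeneousElem 𝒜 a → a ∉ m →
      ∃ s ∈ S, s ∈ m ⊔ Ideal.span {a} := by
    intro a ha ham
    by_contra h
    push_neg at h
    have hJ : (m ⊔ Ideal.span {a}).IsHomogeneous 𝒜 :=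
      hmh.sup (Ideal.homogeneous_span 𝒜 {a} (by rintro x rfl; exact ha))
    have : m ⊔ Ideal.span {a} ≤ m := hm.le_of_ge ⟨hJ, h⟩ le_sup_left
    exact ham (this (le_sup_right (α := Ideal R) (Ideal.subset_span rfl)))
  refine ⟨m, ⟨hmh, fun htop => hmS 1 h1 (htop ▸ Submodule.mem_top), ?_⟩, hmS⟩
  intro a b ha hb hab
  by_contra h
  push_neg at h
  obtain ⟨ham, hbm⟩ := h
  obtain ⟨s, hsS, hs⟩ := key a ha ham
  obtain ⟨t, htS, ht⟩ := key b hb hbm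
  obtain ⟨p, hp, q, hq, hpq⟩ := Submodule.mem_sup.1 hs
  obtain ⟨r, hr⟩ := Ideal.mem_span_singleton'.1 hq
  obtain ⟨p', hp', q', hq', hpq'⟩ := Submodule.mem_sup.1 ht
  obtain ⟨r', hr'⟩ := Ideal.mem_span_singleton'.1 hq'
  have hst : s * t ∈ m := by
    have hs2 : s = p + r * a := by rw [← hpq, hr]
    have ht2 : t = p' + r' * b := by rw [← hpq', hr']
    have : s * t = p * t + (a * p') * r + (r * r') * (a * b) := by
      rw [hs2, ht2]; ring
    rw [this]
    exact Ideal.add_mem _ (Ideal.add_mem _ (Ideal.mul_mem_right _ _ hp)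
      (Ideal.mul_mem_right _ _ (Ideal.mul_mem_left _ _ hp')))
      (Ideal.mul_mem_left _ _ hab)
  exact hmS _ (hmul s hsS t htS) hst

theorem stmt_6 : IsGelfandGraded 𝒜 ↔
    ∀ M M' : Ideal R, IsGradedMaximal 𝒜 M → IsGradedMaximal 𝒜 M' → M ≠ M' →
      ∃ x y : R, SetLike.IsHomogeneousElem 𝒜 x ∧ SetLike.IsHomogeneousElem 𝒜 y ∧
        x * y = 0 ∧ x ∉ M' ∧ y ∉ M := by
  constructor
  · -- Gelfand → separation
    intro hGel M M' hM hM' hne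
    by_contra h
    push_neg at h
    -- the multiplicative set of products x*y with x ∉ M', y ∉ M homogeneous
    set S : Set R := {r | ∃ x y : R, SetLike.IsHomogeneousElem 𝒜 x ∧ SetLike.IsHomogeneousElem 𝒜 y ∧
      x ∉ M' ∧ y ∉ M ∧ r = x * y} with hS
    have hM'prime := gradedMaximal_isGradedPrime 𝒜 hM'
    have hMprime := gradedMaximal_isGradedPrime 𝒜 hM
    have h1M : (1 : R) ∉ M := fun hmem => hM.2.1 (Ideal.eq_top_of_isUnit_mem _ hmem isUnit_one)
    have h1M' : (1 : R) ∉ M' := fun hmem => hM'.2.1 (Ideal.eq_top_of_isUnit_mem _ hmem isUnit_one)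
    obtain ⟨P, hP, hPS⟩ := exists_gradedPrime_disjoint 𝒜 S
      (by rintro s ⟨x, y, hx, hy, -, -, rfl⟩; exact SetLike.IsHomogeneousElem.mul hx hy)
      (by
        rintro s ⟨x, y, hx, hy, hxM', hyM, rfl⟩ t ⟨x', y', hx', hy', hx'M', hy'M, rfl⟩
        refine ⟨x * x', y * y', SetLike.IsHomogeneousElem.mul hx hx',
          SetLike.IsHomogeneousElem.mul hy hy', ?_, ?_, by ring⟩
        · intro hmem
          rcases hM'prime.2.2 x x' hx hx' hmem with h | h
          exacts [hxM' h, hx'M' h]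
        · intro hmem
          rcases hMprime.2.2 y y' hy hy' hmem with h | h
          exacts [hyM h, hy'M h])
      ⟨1, 1, SetLike.isHomogeneousElem_one 𝒜, SetLike.isHomogeneousElem_one 𝒜, h1M', h1M, (one_mul 1).symm⟩
      (by
        rintro ⟨x, y, hx, hy, hxM', hyM, hxy⟩
        exact hyM (h x y hx hy hxy.symm hxM'))
    have hPM : P ≤ M := by
      refine graded_le_of_homog 𝒜 hP.1 fun r hr hrP => ?_
      by_contra hrM
      exact hPS r ⟨1, r, SetLike.isHomogeneousElem_one 𝒜, hr, h1M', hrM, (one_mul r).symm⟩ hrP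
    have hPM' : P ≤ M' := by
      refine graded_le_of_homog 𝒜 hP.1 fun r hr hrP => ?_
      by_contra hrM'
      exact hPS r ⟨r, 1, hr, SetLike.isHomogeneousElem_one 𝒜, hrM', h1M, (mul_one r).symm⟩ hrP
    obtain ⟨N, -, hNuniq⟩ := hGel P hP
    exact hne ((hNuniq M ⟨hM, hPM⟩).trans (hNuniq M' ⟨hM', hPM'⟩).symm)
  · -- separation → Gelfand
    intro hsep P hP
    obtain ⟨M, hM, hPM⟩ := exists_gradedMaximal 𝒜 hP.1 hP.2.1
    refine ⟨M, ⟨hM, hPM⟩, ?_⟩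
    rintro M' ⟨hM', hPM'⟩
    by_contra hne
    obtain ⟨x, y, hx, hy, hxy, hxM, hyM'⟩ := hsep M' M hM' hM hne
    have : x * y ∈ P := hxy ▸ P.zero_mem
    rcases hP.2.2 x y hx hy this with h | h
    exacts [hxM (hPM h), hyM' (hPM' h)]
end Statements
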